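/- (Main theorem) Let Ω be a countable set, H = (ℓ²(Ω))^N, A : H → (ℓ²(Ω))^m bounded linear acting row-block-wise with 0 < τ < 2/‖A*A‖, φ₁(x) = Σ_{j=1}^N ‖x_j‖₂, φ₂(x) = ½‖Ax − u‖². Then for any x^0 ∈ H, the forward–backward iterates x^{k+1} = J_τ(x^k − τA*(Ax^k − u)) converge strongly (in norm) to a minimizer x* of φ₁ + φ₂, assuming minimizers exist. -/

import Mathlib

open Filter
open scoped RealInnerProductSpace
noncomputable def St {E : Type*} [NormedAddCommGroup E] [InnerProductSpace ℝ E]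
    (τ : ℝ) (a : E) : E := (max (‖a‖ - τ) 0 / ‖a‖) • a

section StLemmas
variable {E : Type*} [NormedAddCommGroup E] [InnerProductSpace ℝ E]

lemma St_norm {τ : ℝ} (hτ : 0 ≤ τ) (a : E) : ‖St τ a‖ = max (‖a‖ - τ) 0 := by
  rcases eq_or_ne a 0 with rfl | ha
  · simp [St, hτ]
  · have h : (0:ℝ) < ‖a‖ := norm_pos_iff.mpr ha
    rw [St, norm_smul, Real.norm_eq_abs, abs_of_nonneg (by positivity),
      div_mul_cancel₀ _ h.ne']

lemma St_of_le {τ : ℝ} {a : E} (h : ‖a‖ ≤ τ) : St τ a = 0 := by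
  rw [St, max_eq_right (by linarith), zero_div, zero_smul]

lemma St_of_ge {τ : ℝ} {a : E} (h0 : 0 < ‖a‖) (h : τ ≤ ‖a‖) :
    St τ a = (1 - τ / ‖a‖) • a := by
  rw [St, max_eq_left (by linarith)]
  congr 1
  field_simp

lemma St_subgrad {τ : ℝ} (hτ : 0 ≤ τ) (a b : E) :
    ⟪a - St τ a, b - St τ a⟫ ≤ τ * ‖b‖ - τ * ‖St τ a‖ := by
  have hab : ⟪a, b⟫ ≤ ‖a‖ * ‖b‖ := real_inner_le_norm a b
  rcases le_or_gt ‖a‖ τ with h | h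
  · rw [St_of_le h]
    simp only [sub_zero, norm_zero, mul_zero]
    have hb : (0:ℝ) ≤ ‖b‖ := norm_nonneg b
    nlinarith [norm_nonneg a]
  · have h0 : (0:ℝ) < ‖a‖ := lt_of_le_of_lt hτ h
    rw [St_norm hτ, max_eq_left (by linarith), St_of_ge h0 h.le]
    have e1 : a - (1 - τ / ‖a‖) • a = (τ / ‖a‖) • a := by
      rw [sub_smul, one_smul, sub_sub_cancel]
    rw [e1, real_inner_smul_left, inner_sub_right, real_inner_smul_right,
      real_inner_self_eq_norm_sq]
    have hd : 0 ≤ τ / ‖a‖ := by positivity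
    have : τ / ‖a‖ * ⟪a, b⟫ ≤ τ / ‖a‖ * (‖a‖ * ‖b‖) :=
      mul_le_mul_of_nonneg_left hab hd
    have e2 : τ / ‖a‖ * (‖a‖ * ‖b‖) = τ * ‖b‖ := by field_simp
    have e3 : τ / ‖a‖ * ((1 - τ / ‖a‖) * ‖a‖ ^ 2) = τ * (‖a‖ - τ) := by
      field_simp
    linarith

lemma St_firm {τ : ℝ} (hτ : 0 ≤ τ) (a b : E) :
    ‖St τ a - St τ b‖ ^ 2 ≤ ⟪St τ a - St τ b, a - b⟫ := by
  have h1 := St_subgrad hτ a (St τ b)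
  have h2 := St_subgrad hτ b (St τ a)
  set p := St τ a with hp
  set q := St τ b with hq
  rw [← real_inner_self_eq_norm_sq]
  simp only [inner_sub_left, inner_sub_right] at h1 h2 ⊢
  have c1 : ⟪p, a⟫ = ⟪a, p⟫ := real_inner_comm _ _
  have c2 : ⟪q, a⟫ = ⟪a, q⟫ := real_inner_comm _ _
  have c3 : ⟪p, b⟫ = ⟪b, p⟫ := real_inner_comm _ _
  have c4 : ⟪q, b⟫ = ⟪b, q⟫ := real_inner_comm _ _
  have c5 : ⟪q, p⟫ = ⟪p, q⟫ := real_inner_comm _ _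
  linarith

lemma St_prox {τ : ℝ} (hτ : 0 ≤ τ) (a b : E) :
    τ * ‖St τ a‖ + ‖St τ a - a‖ ^ 2 / 2 + ‖b - St τ a‖ ^ 2 / 2
      ≤ τ * ‖b‖ + ‖b - a‖ ^ 2 / 2 := by
  have h1 := St_subgrad hτ a b
  have e : b - a = (b - St τ a) - (a - St τ a) := by abel
  have expand : ‖b - St τ a - (a - St τ a)‖ ^ 2
      = ‖b - St τ a‖ ^ 2 - 2 * ⟪b - St τ a, a - St τ a⟫ + ‖a - St τ a‖ ^ 2 :=
    norm_sub_sq_real _ _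
  rw [e, expand]
  have e2 : ⟪b - St τ a, a - St τ a⟫ = ⟪a - St τ a, b - St τ a⟫ := real_inner_comm _ _
  have e3 : ‖a - St τ a‖ ^ 2 = ‖St τ a - a‖ ^ 2 := by rw [norm_sub_rev]
  linarith

end StLemmas

section RowLemmas
variable {E : Type*} [NormedAddCommGroup E] [InnerProductSpace ℝ E]

lemma St_caseA {τ : ℝ} (hτ : 0 < τ) {w : E} (hw : ‖w‖ < τ) (v : E) :
    min ‖v‖ (τ - ‖w‖) ≤ ‖St τ (w + v) - St τ w - v‖ := by
  rw [St_of_le hw.le, sub_zero]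
  have hS : ‖St τ (w + v)‖ = max (‖w + v‖ - τ) 0 := St_norm hτ.le _
  have htri : ‖v‖ - ‖St τ (w + v)‖ ≤ ‖St τ (w + v) - v‖ := by
    have h := abs_norm_sub_norm_le (St τ (w + v)) v
    rw [abs_sub_comm] at h
    exact le_trans (le_abs_self _) h
  rcases le_or_gt ‖v‖ (τ - ‖w‖) with h | h
  · have hwv : ‖w + v‖ ≤ τ := le_trans (norm_add_le w v) (by linarith)
    have : ‖St τ (w + v)‖ = 0 := by rw [hS, max_eq_right (by linarith)]
    calc min ‖v‖ (τ - ‖w‖) ≤ ‖v‖ := min_le_left _ _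
      _ ≤ ‖St τ (w + v) - v‖ := by linarith
  · have hSle : ‖St τ (w + v)‖ ≤ ‖w‖ + ‖v‖ - τ := by
      rw [hS]
      apply max_le
      · linarith [norm_add_le w v]
      · linarith
    calc min ‖v‖ (τ - ‖w‖) ≤ τ - ‖w‖ := min_le_right _ _
      _ ≤ ‖St τ (w + v) - v‖ := by linarith

lemma St_caseB {τ : ℝ} (hτ : 0 < τ) {w v : E} (hw : τ ≤ ‖w‖) {M : ℝ} (hv : ‖v‖ ≤ M) :
    ‖v‖ ^ 2 ≤ ((‖w‖ + M) / τ) ^ 2 *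
      (‖St τ (w + v) - St τ w - v‖ ^ 2 + 4 * |⟪w, v⟫|) := by
  have hw0 : (0:ℝ) < ‖w‖ := lt_of_lt_of_le hτ hw
  have hM : (0:ℝ) ≤ M := le_trans (norm_nonneg v) hv
  have hs : (0:ℝ) ≤ |⟪w, v⟫| := abs_nonneg _
  rcases le_or_gt ‖w + v‖ τ with h | h
  · -- small case
    have expand : ‖w + v‖ ^ 2 = ‖w‖ ^ 2 + 2 * ⟪w, v⟫ + ‖v‖ ^ 2 := norm_add_sq_real w v
    have h1 : ‖v‖ ^ 2 ≤ 2 * |⟪w, v⟫| := by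
      nlinarith [neg_le_abs ⟪w, v⟫, sq_nonneg ‖w + v‖, norm_nonneg (w + v)]
    have hC1 : 1 ≤ ((‖w‖ + M) / τ) ^ 2 := by
      have h2 : 1 ≤ (‖w‖ + M) / τ := (one_le_div hτ).mpr (by linarith)
      nlinarith
    nlinarith [sq_nonneg ‖St τ (w + v) - St τ w - v‖]
  · -- big case
    have hr0 : (0:ℝ) < ‖w + v‖ := lt_trans hτ h
    set r := ‖w + v‖ with hr
    set ρ := τ / r with hρdef
    set α := τ / ‖w‖ - ρ with hαdef
    have hρ0 : 0 < ρ := by positivity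
    have hρ1 : ρ < 1 := (div_lt_one hr0).mpr h
    have htw1 : τ / ‖w‖ ≤ 1 := (div_le_one hw0).mpr hw
    have htw0 : 0 < τ / ‖w‖ := by positivity
    have hαabs : |α| ≤ 1 := by
      rw [abs_le]; constructor <;> [skip; skip] <;> simp only [hαdef] <;> linarith
    have eE : St τ (w + v) - St τ w - v = α • w - ρ • v := by
      rw [St_of_ge hr0 h.le, St_of_ge hw0 hw]
      simp only [hαdef, hρdef, smul_add, sub_smul, one_smul, smul_smul]
      module
    have expand : ‖α • w - ρ • v‖ ^ 2
        = α ^ 2 * ‖w‖ ^ 2 - 2 * (α * ρ * ⟪w, v⟫) + ρ ^ 2 * ‖v‖ ^ 2 := by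
      rw [norm_sub_sq_real, norm_smul, norm_smul, real_inner_smul_left,
        real_inner_smul_right, Real.norm_eq_abs, Real.norm_eq_abs, mul_pow, mul_pow,
        sq_abs, sq_abs]
      ring
    have hsle : α * ρ * ⟪w, v⟫ ≤ |⟪w, v⟫| := by
      calc α * ρ * ⟪w, v⟫ ≤ |α * ρ * ⟪w, v⟫| := le_abs_self _
        _ = |α| * ρ * |⟪w, v⟫| := by rw [abs_mul, abs_mul, abs_of_pos hρ0]
        _ ≤ 1 * 1 * |⟪w, v⟫| := by
            apply mul_le_mul_of_nonneg_right _ hs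
            exact mul_le_mul hαabs hρ1.le hρ0.le zero_le_one
        _ = |⟪w, v⟫| := by ring
    have h1 : ρ ^ 2 * ‖v‖ ^ 2 ≤ ‖St τ (w + v) - St τ w - v‖ ^ 2 + 4 * |⟪w, v⟫| := by
      rw [eE, expand]
      nlinarith [sq_nonneg α, sq_nonneg ‖w‖, mul_nonneg (sq_nonneg α) (sq_nonneg ‖w‖)]
    have hident : (r / τ) ^ 2 * (ρ ^ 2 * ‖v‖ ^ 2) = ‖v‖ ^ 2 := by
      rw [hρdef]
      field_simp
    have h2 : ‖v‖ ^ 2 ≤ (r / τ) ^ 2 * (‖St τ (w + v) - St τ w - v‖ ^ 2 + 4 * |⟪w, v⟫|) := by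
      rw [← hident]
      exact mul_le_mul_of_nonneg_left h1 (sq_nonneg _)
    refine le_trans h2 (mul_le_mul_of_nonneg_right ?_ (by positivity))
    have hrle : r ≤ ‖w‖ + M := le_trans (norm_add_le w v) (by linarith)
    have : r / τ ≤ (‖w‖ + M) / τ := by
      gcongr
    exact pow_le_pow_left₀ (by positivity) this 2

end RowLemmas

section Helpers

lemma le_of_sq_le_sq' {x y : ℝ} (hx : 0 ≤ x) (hy : 0 ≤ y) (h : x ^ 2 ≤ y ^ 2) : x ≤ y := by
  nlinarith

lemma tendsto_zero_of_sq_tendsto_zero {α : Type*} {l : Filter α} {f : α → ℝ}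
    (hf : ∀ a, 0 ≤ f a) (h : Filter.Tendsto (fun a => f a ^ 2) l (nhds 0)) :
    Filter.Tendsto f l (nhds 0) := by
  have h2 := (Real.continuous_sqrt.tendsto 0).comp h
  have heq : (fun a => Real.sqrt (f a ^ 2)) = f := funext fun a => Real.sqrt_sq (hf a)
  simpa only [Function.comp_def, heq, Real.sqrt_zero] using h2

end Helpers
variable {H0 : Type*} [NormedAddCommGroup H0] [InnerProductSpace ℝ H0] [CompleteSpace H0]

instance {n : ℕ} : CompleteSpace (PiLp 2 (fun _ : Fin n => H0)) :=
  inferInstance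

set_option maxHeartbeats 2000000
/-- Main theorem (strong convergence of forward–backward splitting for joint
sparse recovery): with `H = (ℓ²(Ω))^N`, `0 < τ` and `τ‖A*A‖ < 2`, the iterates
`x^{k+1} = J_τ(x^k - τA*(Ax^k - u))` converge strongly to a minimizer `x*` of
`φ₁ + φ₂` (the set of minimizers being nonempty, and weak convergence to a
minimizer being known). -/
theorem stmt_17 {N m : ℕ}
    (A : PiLp 2 (fun _ : Fin N => H0) →L[ℝ] PiLp 2 (fun _ : Fin m => H0))
    (u : PiLp 2 (fun _ : Fin m => H0))
    (τ : ℝ) (hτ0 : 0 < τ) (hτ2 : τ * ‖(ContinuousLinearMap.adjoint A).comp A‖ < 2)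
    (x : ℕ → PiLp 2 (fun _ : Fin N => H0))
    (hiter : ∀ (k : ℕ) (j : Fin N),
      x (k + 1) j =
        (max (‖(x k - τ • (ContinuousLinearMap.adjoint A) (A (x k) - u)) j‖ - τ) 0 /
            ‖(x k - τ • (ContinuousLinearMap.adjoint A) (A (x k) - u)) j‖) •
          (x k - τ • (ContinuousLinearMap.adjoint A) (A (x k) - u)) j)
    (hweak : ∃ xs : PiLp 2 (fun _ : Fin N => H0),
      (∀ y : PiLp 2 (fun _ : Fin N => H0),
        (∑ j, ‖xs j‖) + ‖A xs - u‖ ^ 2 / 2 ≤ (∑ j, ‖y j‖) + ‖A y - u‖ ^ 2 / 2) ∧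
      ∀ y : PiLp 2 (fun _ : Fin N => H0),
        Tendsto (fun k => ⟪x k, y⟫) atTop (nhds ⟪xs, y⟫)) :
    ∃ xs : PiLp 2 (fun _ : Fin N => H0),
      (∀ y : PiLp 2 (fun _ : Fin N => H0),
        (∑ j, ‖xs j‖) + ‖A xs - u‖ ^ 2 / 2 ≤ (∑ j, ‖y j‖) + ‖A y - u‖ ^ 2 / 2) ∧
      Tendsto x atTop (nhds xs) := by
  classical
  obtain ⟨xs, hmin, hwk⟩ := hweak
  refine ⟨xs, hmin, ?_⟩
  set A' := ContinuousLinearMap.adjoint A with hA'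
  set B := A'.comp A with hBdef
  have hBnorm : ‖B‖ = ‖A‖ * ‖A‖ := ContinuousLinearMap.norm_adjoint_comp_self A
  set g := A' (A xs - u) with hgdef
  set w := xs - τ • g with hwdef
  have hns : ∀ y : PiLp 2 (fun _ : Fin N => H0), ‖y‖ ^ 2 = ∑ j, ‖y j‖ ^ 2 := fun y => PiLp.norm_sq_eq_of_L2 _ y
  have hip : ∀ y z : PiLp 2 (fun _ : Fin N => H0), ⟪y, z⟫ = ∑ j, ⟪y j, z j⟫ := fun y z => PiLp.inner_apply y z
  have hAsq : ∀ y : PiLp 2 (fun _ : Fin N => H0), ‖A y‖ ^ 2 ≤ ‖B‖ * ‖y‖ ^ 2 := by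
    intro y
    have e1 : ‖A y‖ ^ 2 = ⟪B y, y⟫ := by
      rw [hBdef, ContinuousLinearMap.comp_apply, hA',
        ContinuousLinearMap.adjoint_inner_left, real_inner_self_eq_norm_sq]
    have e2 : ⟪B y, y⟫ ≤ ‖B y‖ * ‖y‖ := real_inner_le_norm _ _
    have e3 : ‖B y‖ ≤ ‖B‖ * ‖y‖ := B.le_opNorm y
    rw [e1]
    refine e2.trans ?_
    calc ‖B y‖ * ‖y‖ ≤ (‖B‖ * ‖y‖) * ‖y‖ := mul_le_mul_of_nonneg_right e3 (norm_nonneg y)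
      _ = ‖B‖ * ‖y‖ ^ 2 := by ring
  -- Step 1 : the minimizer is a fixed point of the row-wise soft thresholding
  have hfix : ∀ j, St τ (w j) = xs j := by
    set p : PiLp 2 (fun _ : Fin N => H0) := WithLp.toLp 2 (fun j => St τ (w j) : ∀ _ : Fin N, H0) with hpdef
    have hpj : ∀ j, p j = St τ (w j) := fun j => rfl
    have S1 : τ * (∑ j, ‖p j‖) + ‖p - w‖ ^ 2 / 2 + ‖xs - p‖ ^ 2 / 2
        ≤ τ * (∑ j, ‖xs j‖) + ‖xs - w‖ ^ 2 / 2 := by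
      rw [hns, hns, hns, Finset.mul_sum, Finset.mul_sum, Finset.sum_div, Finset.sum_div,
        Finset.sum_div, ← Finset.sum_add_distrib, ← Finset.sum_add_distrib,
        ← Finset.sum_add_distrib]
      apply Finset.sum_le_sum
      intro j _
      have h := St_prox hτ0.le (w j) (xs j)
      simpa only [PiLp.sub_apply, hpj] using h
    have e1 : ‖xs - w‖ ^ 2 = τ ^ 2 * ‖g‖ ^ 2 := by
      rw [hwdef, sub_sub_cancel, norm_smul, Real.norm_eq_abs, mul_pow, sq_abs]
    have e2 : ‖p - w‖ ^ 2 = ‖p - xs‖ ^ 2 + 2 * (τ * ⟪p - xs, g⟫) + τ ^ 2 * ‖g‖ ^ 2 := by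
      have e : p - w = (p - xs) + τ • g := by rw [hwdef]; abel
      rw [e, norm_add_sq_real, real_inner_smul_right, norm_smul, Real.norm_eq_abs,
        mul_pow, sq_abs]
    have e3 : ‖xs - p‖ ^ 2 = ‖p - xs‖ ^ 2 := by rw [norm_sub_rev]
    have hm := hmin p
    have e4 : ‖A p - u‖ ^ 2 = ‖A xs - u‖ ^ 2 + 2 * ⟪g, p - xs⟫ + ‖A (p - xs)‖ ^ 2 := by
      have e : A p - u = (A xs - u) + A (p - xs) := by rw [map_sub]; abel
      rw [e, norm_add_sq_real, hgdef, hA', ContinuousLinearMap.adjoint_inner_left]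
    have e5 := hAsq (p - xs)
    have ecomm : ⟪g, p - xs⟫ = ⟪p - xs, g⟫ := real_inner_comm _ _
    rw [e1, e2, e3] at S1
    rw [e4, ecomm] at hm
    have hD : 0 ≤ (∑ j, ‖p j‖) - (∑ j, ‖xs j‖) + ⟪p - xs, g⟫ + ‖A (p - xs)‖ ^ 2 / 2 := by
      linarith
    have hτD := mul_nonneg hτ0.le hD
    have hτDe : τ * ((∑ j, ‖p j‖) - (∑ j, ‖xs j‖) + ⟪p - xs, g⟫ + ‖A (p - xs)‖ ^ 2 / 2)
        = τ * (∑ j, ‖p j‖) - τ * (∑ j, ‖xs j‖) + τ * ⟪p - xs, g⟫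
          + τ * ‖A (p - xs)‖ ^ 2 / 2 := by ring
    rw [hτDe] at hτD
    have hτe5 := mul_le_mul_of_nonneg_left e5 hτ0.le
    have h1 : 2 * ‖p - xs‖ ^ 2 ≤ (τ * ‖B‖) * ‖p - xs‖ ^ 2 := by
      have : τ * (‖B‖ * ‖p - xs‖ ^ 2) = (τ * ‖B‖) * ‖p - xs‖ ^ 2 := by ring
      rw [this] at hτe5
      linarith
    have hpxs : ‖p - xs‖ ^ 2 ≤ 0 := by nlinarith [h1, hτ2]
    have hpeq : p = xs := by
      have h0 : ‖p - xs‖ = 0 :=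
        le_antisymm (by nlinarith [norm_nonneg (p - xs)]) (norm_nonneg _)
      exact sub_eq_zero.mp (norm_eq_zero.mp h0)
    intro j
    rw [← hpj j, hpeq]
  -- Step 2 : dynamics
  have hiter' : ∀ (k : ℕ) (j : Fin N),
      x (k + 1) j = St τ ((x k - τ • A' (A (x k) - u)) j) := fun k j => hiter k j
  set v : ℕ → PiLp 2 (fun _ : Fin N => H0) :=
    fun k => (x k - xs) - τ • B (x k - xs) with hvdef
  have hyv : ∀ k, x k - τ • A' (A (x k) - u) = w + v k := by
    intro k
    have e : A (x k) - u = (A xs - u) + A (x k - xs) := by rw [map_sub]; abel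
    have e2 : A' (A (x k) - u) = g + B (x k - xs) := by
      rw [e, map_add, hgdef, hBdef, ContinuousLinearMap.comp_apply]
    rw [e2, hvdef, hwdef, smul_add]
    beta_reduce
    abel
  have hrowit : ∀ k j, (x (k+1) - xs) j = St τ (w j + v k j) - St τ (w j) := by
    intro k j
    rw [PiLp.sub_apply, hiter' k j, hyv k, PiLp.add_apply, ← hfix j]
  have F1 : ∀ k, ‖x (k+1) - xs‖ ^ 2 ≤ ⟪x (k+1) - xs, v k⟫ := by
    intro k
    rw [hns, hip]
    apply Finset.sum_le_sum
    intro j _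
    rw [hrowit k j]
    have h := St_firm hτ0.le (w j + v k j) (w j)
    rwa [add_sub_cancel_left] at h
  have F2 : ∀ k, ‖v k‖ ^ 2 ≤ ‖x k - xs‖ ^ 2 - (τ * (2 - τ * ‖B‖)) * ‖A (x k - xs)‖ ^ 2 := by
    intro k
    have hBsa : ⟪x k - xs, B (x k - xs)⟫ = ‖A (x k - xs)‖ ^ 2 := by
      rw [hBdef, ContinuousLinearMap.comp_apply, hA',
        ContinuousLinearMap.adjoint_inner_right, real_inner_self_eq_norm_sq]
    have hBle : ‖B (x k - xs)‖ ≤ ‖A‖ * ‖A (x k - xs)‖ := by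
      have h1 : ‖A' (A (x k - xs))‖ ≤ ‖A'‖ * ‖A (x k - xs)‖ := A'.le_opNorm _
      have h2 : ‖A'‖ = ‖A‖ := by rw [hA']; exact ContinuousLinearMap.adjoint.norm_map A
      rw [h2] at h1
      rw [hBdef, ContinuousLinearMap.comp_apply]
      exact h1
    have hexp : ‖v k‖ ^ 2 = ‖x k - xs‖ ^ 2 - 2 * τ * ‖A (x k - xs)‖ ^ 2
        + τ ^ 2 * ‖B (x k - xs)‖ ^ 2 := by
      simp only [hvdef]
      rw [norm_sub_sq_real, real_inner_smul_right, hBsa, norm_smul, Real.norm_eq_abs,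
        mul_pow, sq_abs]
      ring
    have hB2 : ‖B (x k - xs)‖ ^ 2 ≤ (‖A‖ * ‖A (x k - xs)‖) ^ 2 :=
      pow_le_pow_left₀ (norm_nonneg _) hBle 2
    have key : τ ^ 2 * ‖B (x k - xs)‖ ^ 2 ≤ (τ * (τ * ‖B‖)) * ‖A (x k - xs)‖ ^ 2 := by
      calc τ ^ 2 * ‖B (x k - xs)‖ ^ 2 ≤ τ ^ 2 * (‖A‖ * ‖A (x k - xs)‖) ^ 2 :=
            mul_le_mul_of_nonneg_left hB2 (sq_nonneg τ)
        _ = (τ * (τ * ‖B‖)) * ‖A (x k - xs)‖ ^ 2 := by rw [hBnorm]; ring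
    have expand2 : ‖x k - xs‖ ^ 2 - (τ * (2 - τ * ‖B‖)) * ‖A (x k - xs)‖ ^ 2
        = ‖x k - xs‖ ^ 2 - 2 * τ * ‖A (x k - xs)‖ ^ 2
          + (τ * (τ * ‖B‖)) * ‖A (x k - xs)‖ ^ 2 := by ring
    rw [hexp, expand2]
    linarith [key]
  have F4 : ∀ k, ‖v k‖ ≤ ‖x k - xs‖ := by
    intro k
    apply le_of_sq_le_sq' (norm_nonneg _) (norm_nonneg _)
    have hc : 0 ≤ (τ * (2 - τ * ‖B‖)) * ‖A (x k - xs)‖ ^ 2 :=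
      mul_nonneg (mul_nonneg hτ0.le (by linarith)) (sq_nonneg _)
    linarith [F2 k]
  have F3 : ∀ k, ‖x (k+1) - xs‖ ≤ ‖v k‖ := by
    intro k
    rcases (norm_nonneg (x (k+1) - xs)).eq_or_lt' with h0 | h0
    · rw [h0]; exact norm_nonneg _
    · have h1 := F1 k
      have h2 : ⟪x (k+1) - xs, v k⟫ ≤ ‖x (k+1) - xs‖ * ‖v k‖ := real_inner_le_norm _ _
      have h3 : ‖x (k+1) - xs‖ * ‖x (k+1) - xs‖ ≤ ‖x (k+1) - xs‖ * ‖v k‖ := by nlinarith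
      exact le_of_mul_le_mul_left h3 h0
  set a : ℕ → ℝ := fun k => ‖x k - xs‖ with hadef
  set b : ℕ → ℝ := fun k => ‖v k‖ with hbdef
  have ha_anti : Antitone a := antitone_nat_of_succ_le fun k => (F3 k).trans (F4 k)
  have ha_lim : Tendsto a atTop (nhds (⨅ k, a k)) :=
    tendsto_atTop_ciInf ha_anti ⟨0, by rintro r ⟨k, rfl⟩; exact norm_nonneg _⟩
  set β := ⨅ k, a k with hβdef
  have hb_lim : Tendsto b atTop (nhds β) :=
    tendsto_of_tendsto_of_tendsto_of_le_of_le
      (ha_lim.comp (tendsto_add_atTop_nat 1)) ha_lim (fun k => F3 k) (fun k => F4 k)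
  have hsq : ∀ k, ‖(x (k+1) - xs) - v k‖ ^ 2 ≤ b k ^ 2 - a (k+1) ^ 2 := by
    intro k
    have h1 := F1 k
    have e : ‖(x (k+1) - xs) - v k‖ ^ 2
        = ‖x (k+1) - xs‖ ^ 2 - 2 * ⟪x (k+1) - xs, v k⟫ + ‖v k‖ ^ 2 := norm_sub_sq_real _ _
    simp only [hadef, hbdef]
    linarith [e, h1]
  have he2 : Tendsto (fun k => b k ^ 2 - a (k+1) ^ 2) atTop (nhds 0) := by
    have h1 : Tendsto (fun k => b k ^ 2) atTop (nhds (β ^ 2)) := hb_lim.pow 2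
    have h2 : Tendsto (fun k => a (k+1) ^ 2) atTop (nhds (β ^ 2)) :=
      (ha_lim.comp (tendsto_add_atTop_nat 1)).pow 2
    simpa using h1.sub h2
  have herr : Tendsto (fun k => ‖(x (k+1) - xs) - v k‖) atTop (nhds 0) := by
    apply tendsto_zero_of_sq_tendsto_zero (fun k => norm_nonneg _)
    exact tendsto_of_tendsto_of_tendsto_of_le_of_le tendsto_const_nhds he2
      (fun k => sq_nonneg _) (fun k => hsq k)
  have hrowle : ∀ (y : PiLp 2 (fun _ : Fin N => H0)) (j : Fin N), ‖y j‖ ≤ ‖y‖ := by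
    intro y j
    apply le_of_sq_le_sq' (norm_nonneg _) (norm_nonneg _)
    rw [hns]
    exact Finset.single_le_sum (f := fun i => ‖y i‖ ^ 2) (fun i _ => sq_nonneg _)
      (Finset.mem_univ j)
  have hdj : ∀ j, Tendsto (fun k => ‖St τ (w j + v k j) - St τ (w j) - v k j‖)
      atTop (nhds 0) := by
    intro j
    refine tendsto_of_tendsto_of_tendsto_of_le_of_le tendsto_const_nhds herr
      (fun k => norm_nonneg _) (fun k => ?_)
    have e : St τ (w j + v k j) - St τ (w j) - v k j = ((x (k+1) - xs) - v k) j := by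
      rw [PiLp.sub_apply (x := x (k+1) - xs) (y := v k), hrowit k j]
    rw [e]
    exact hrowle _ j
  have hweak0 : ∀ y, Tendsto (fun k => ⟪x k - xs, y⟫) atTop (nhds 0) := by
    intro y
    have h1 := (hwk y).sub (tendsto_const_nhds (x := ⟪xs, y⟫))
    have e : (fun k => ⟪x k - xs, y⟫) = fun k => ⟪x k, y⟫ - ⟪xs, y⟫ :=
      funext fun k => by rw [inner_sub_left]
    rw [e]
    simpa using h1
  have hwvj : ∀ j, Tendsto (fun k => ⟪w j, v k j⟫) atTop (nhds 0) := by
    intro j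
    set sj : PiLp 2 (fun _ : Fin N => H0) := WithLp.toLp 2 (Pi.single j (w j) : ∀ _ : Fin N, H0) with hsj
    have hinner : ∀ z : PiLp 2 (fun _ : Fin N => H0), ⟪z, sj⟫ = ⟪z j, w j⟫ := by
      intro z
      rw [hip, Finset.sum_eq_single j]
      · simp only [hsj, WithLp.ofLp_toLp, Pi.single_eq_same]
      · intro i _ hne
        simp only [hsj, WithLp.ofLp_toLp, Pi.single_eq_of_ne hne, inner_zero_right]
      · intro habs; exact absurd (Finset.mem_univ j) habs
    have hBsym : ∀ (y z : PiLp 2 (fun _ : Fin N => H0)), ⟪B y, z⟫ = ⟪y, B z⟫ := by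
      intro y z
      rw [hBdef, ContinuousLinearMap.comp_apply, ContinuousLinearMap.comp_apply, hA',
        ContinuousLinearMap.adjoint_inner_left, ContinuousLinearMap.adjoint_inner_right]
    have e : ∀ k, ⟪w j, v k j⟫ = ⟪x k - xs, sj - τ • B sj⟫ := by
      intro k
      rw [real_inner_comm, ← hinner (v k)]
      simp only [hvdef]
      rw [inner_sub_left, real_inner_smul_left, hBsym, inner_sub_right,
        real_inner_smul_right]
    rw [show (fun k => ⟪w j, v k j⟫) = fun k => ⟪x k - xs, sj - τ • B sj⟫ from funext e]
    exact hweak0 _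
  have hMb : ∀ k (j : Fin N), ‖v k j‖ ≤ a 0 := fun k j =>
    (hrowle (v k) j).trans ((F4 k).trans (ha_anti (Nat.zero_le k)))
  have hvj : ∀ j, Tendsto (fun k => ‖v k j‖) atTop (nhds 0) := by
    intro j
    rcases lt_or_ge ‖w j‖ τ with hcase | hcase
    · have hdj' := hdj j
      rw [Metric.tendsto_atTop] at hdj' ⊢
      intro ε hε
      obtain ⟨K, hK⟩ := hdj' (min ε (τ - ‖w j‖)) (lt_min hε (by linarith))
      refine ⟨K, fun k hk => ?_⟩
      have h1 := hK k hk
      rw [Real.dist_eq, sub_zero, abs_of_nonneg (norm_nonneg _)] at h1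
      rw [Real.dist_eq, sub_zero, abs_of_nonneg (norm_nonneg _)]
      have h2 := St_caseA hτ0 hcase (v k j)
      rcases le_or_gt (τ - ‖w j‖) ‖v k j‖ with hc | hc
      · exfalso
        rw [min_eq_right hc] at h2
        have h3 := lt_of_le_of_lt h2 h1
        have h4 := min_le_right ε (τ - ‖w j‖)
        linarith
      · rw [min_eq_left hc.le] at h2
        exact lt_of_le_of_lt h2 (lt_of_lt_of_le h1 (min_le_left _ _))
    · apply tendsto_zero_of_sq_tendsto_zero (fun k => norm_nonneg _)
      have hub : ∀ k, ‖v k j‖ ^ 2 ≤ ((‖w j‖ + a 0) / τ) ^ 2 *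
          (‖St τ (w j + v k j) - St τ (w j) - v k j‖ ^ 2 + 4 * |⟪w j, v k j⟫|) :=
        fun k => St_caseB hτ0 hcase (hMb k j)
      have hlim : Tendsto (fun k => ((‖w j‖ + a 0) / τ) ^ 2 *
          (‖St τ (w j + v k j) - St τ (w j) - v k j‖ ^ 2 + 4 * |⟪w j, v k j⟫|))
          atTop (nhds 0) := by
        have h1 : Tendsto (fun k => ‖St τ (w j + v k j) - St τ (w j) - v k j‖ ^ 2)
            atTop (nhds 0) := by simpa using (hdj j).pow 2
        have h2 : Tendsto (fun k => |⟪w j, v k j⟫|) atTop (nhds 0) := by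
          simpa using (hwvj j).abs
        have h3 := ((h1.add (h2.const_mul 4)).const_mul (((‖w j‖ + a 0) / τ) ^ 2))
        simpa using h3
      exact tendsto_of_tendsto_of_tendsto_of_le_of_le tendsto_const_nhds hlim
        (fun k => sq_nonneg _) hub
  have hb0 : Tendsto b atTop (nhds 0) := by
    apply tendsto_zero_of_sq_tendsto_zero (fun k => norm_nonneg _)
    have e : (fun k => b k ^ 2) = fun k => ∑ j, ‖v k j‖ ^ 2 := funext fun k => hns (v k)
    rw [e]
    have h1 := tendsto_finset_sum (Finset.univ : Finset (Fin N))
      (fun j _ => (hvj j).pow 2)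
    simpa using h1
  have hβ0 : β = 0 := tendsto_nhds_unique hb_lim hb0
  have ha0 : Tendsto a atTop (nhds 0) := hβ0 ▸ ha_lim
  rw [tendsto_iff_norm_sub_tendsto_zero]
  exact ha0
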